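/- Let (Ω, ℱ, μ) be a probability space, m ⊆ m' ⊆ ℱ sub-σ-algebras, and η, κ ≥ 0 with η + κ < 1. Let λ be a nonnegative, m-measurable, square-integrable random variable; let Z be a square-integrable, m'-measurable random variable that is conditionally Poisson given m with intensity λ; let W be a nonnegative, square-integrable, m'-measurable random variable independent of the σ-algebra generated by m and Z; set λ' := W + η·Z + κ·λ; and let Z' be a square-integrable random variable that is conditionally Poisson given m' with intensity λ'. If in addition E[Z'] = E[Z] and Var(Z') = Var(Z) (second-order stationarity), then Var(Z) = Var(W)/(1 − (η + κ)²) + ((1 − κ² − 2κη)/(1 − (η + κ)²))·E[Z]. -/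

import Mathlib

open MeasureTheory ProbabilityTheory Real

set_option maxHeartbeats 1000000

/-- Stationary variance of the SPINGARCH(1,1) process: under second-order stationarity
(`E[Z'] = E[Z]` and `Var(Z') = Var(Z)`), with `η, κ ≥ 0`, `η + κ < 1`,
`Var(Z) = Var(W)/(1 − (η+κ)²) + ((1 − κ² − 2κη)/(1 − (η+κ)²))·E[Z]`. -/
theorem spingarch_stationary_variance
    {Ω : Type*} [F : MeasurableSpace Ω] (μ : Measure Ω) [IsProbabilityMeasure μ]
    (m m' : MeasurableSpace Ω) (hmm' : m ≤ m') (hm' : m' ≤ F)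
    (η κ : ℝ) (hη : 0 ≤ η) (hκ : 0 ≤ κ) (hηκ : η + κ < 1)
    (lam Z W Z' : Ω → ℝ)
    (hlam_nonneg : ∀ ω, 0 ≤ lam ω)
    (hlam_meas : StronglyMeasurable[m] lam)
    (hlam_L2 : MemLp lam 2 μ)
    (hZ_L2 : MemLp Z 2 μ)
    (hZ_meas : StronglyMeasurable[m'] Z)
    (hZ_mean : μ[Z | m] =ᵐ[μ] lam)
    (hZ_sq : μ[fun ω => Z ω ^ 2 | m] =ᵐ[μ] fun ω => lam ω + lam ω ^ 2)
    (hW_nonneg : ∀ ω, 0 ≤ W ω)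
    (hW_L2 : MemLp W 2 μ)
    (hW_meas : StronglyMeasurable[m'] W)
    (hW_indep : Indep (MeasurableSpace.comap W Real.measurableSpace)
      (m ⊔ MeasurableSpace.comap Z Real.measurableSpace) μ)
    (lam' : Ω → ℝ) (hlam'_def : lam' = fun ω => W ω + η * Z ω + κ * lam ω)
    (hZ'_L2 : MemLp Z' 2 μ)
    (hZ'_mean : μ[Z' | m'] =ᵐ[μ] lam')
    (hZ'_sq : μ[fun ω => Z' ω ^ 2 | m'] =ᵐ[μ] fun ω => lam' ω + lam' ω ^ 2)
    (hstat_mean : ∫ ω, Z' ω ∂μ = ∫ ω, Z ω ∂μ)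
    (hstat_var : variance Z' μ = variance Z μ) :
    variance Z μ = variance W μ / (1 - (η + κ) ^ 2)
      + ((1 - κ ^ 2 - 2 * κ * η) / (1 - (η + κ) ^ 2)) * (∫ ω, Z ω ∂μ) := by

  have hmF : m ≤ F := hmm'.trans hm'
  set a := ∫ ω, Z ω ∂μ with ha_def
  -- basic integrability
  have hZ_int : Integrable Z μ := hZ_L2.integrable one_le_two
  have hlam_int : Integrable lam μ := hlam_L2.integrable one_le_two
  have hW_int : Integrable W μ := hW_L2.integrable one_le_two
  have hZ'_int : Integrable Z' μ := hZ'_L2.integrable one_le_two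
  have hZsq_int : Integrable (fun ω => Z ω ^ 2) μ := hZ_L2.integrable_sq
  have hlamsq_int : Integrable (fun ω => lam ω ^ 2) μ := hlam_L2.integrable_sq
  have hZ'sq_int : Integrable (fun ω => Z' ω ^ 2) μ := hZ'_L2.integrable_sq
  have hmul : Integrable (fun ω => lam ω * Z ω) μ := by
    have h11 : (1 : ENNReal) / 1 = 1 / 2 + 1 / 2 := by
      rw [ENNReal.div_add_div_same]
      norm_num
      rw [ENNReal.div_self (by norm_num) (by norm_num)]
    exact memLp_one_iff_integrable.mp (hZ_L2.smul (r := 1) hlam_L2)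
  -- first moment of Z equals that of lam
  have hca : ∫ ω, lam ω ∂μ = a := by
    rw [ha_def, ← integral_condExp (f := Z) hmF]
    exact integral_congr_ae hZ_mean.symm
  -- second moment of Z
  have hb : ∫ ω, Z ω ^ 2 ∂μ = a + ∫ ω, lam ω ^ 2 ∂μ := by
    rw [← integral_condExp (f := fun ω => Z ω ^ 2) hmF, integral_congr_ae hZ_sq,
      integral_add hlam_int hlamsq_int, hca]
  -- mixed moment
  have hg : ∫ ω, lam ω * Z ω ∂μ = ∫ ω, lam ω ^ 2 ∂μ := by
    have h1 : μ[lam * Z | m] =ᵐ[μ] lam * μ[Z | m] :=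
      condExp_mul_of_stronglyMeasurable_left hlam_meas hmul hZ_int
    have h2 : μ[lam * Z | m] =ᵐ[μ] fun ω => lam ω ^ 2 := by
      filter_upwards [h1, hZ_mean] with ω h1ω h2ω
      simp only [Pi.mul_apply] at h1ω
      rw [h1ω, h2ω]; ring
    calc ∫ ω, lam ω * Z ω ∂μ = ∫ ω, (μ[lam * Z | m]) ω ∂μ :=
          (integral_condExp (f := lam * Z) hmF).symm
      _ = ∫ ω, lam ω ^ 2 ∂μ := integral_congr_ae h2
  -- lam' is L2
  have hV_L2 : MemLp (fun ω => η * Z ω + κ * lam ω) 2 μ :=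
    (hZ_L2.const_mul η).add (hlam_L2.const_mul κ)
  have hlam'_L2 : MemLp lam' 2 μ := by
    rw [hlam'_def]
    exact (hW_L2.add (hZ_L2.const_mul η)).add (hlam_L2.const_mul κ)
  have hlam'_int : Integrable lam' μ := hlam'_L2.integrable one_le_two
  have hlam'sq_int : Integrable (fun ω => lam' ω ^ 2) μ := hlam'_L2.integrable_sq
  -- E[Z'] = E[lam']
  have hZ'm : ∫ ω, lam' ω ∂μ = ∫ ω, Z' ω ∂μ := by
    rw [← integral_condExp (f := Z') hm']
    exact integral_congr_ae hZ'_mean.symm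
  -- E[lam'] expansion
  have hWZ_int : Integrable (fun ω => W ω + η * Z ω) μ := hW_int.add (hZ_int.const_mul η)
  have hEl : ∫ ω, lam' ω ∂μ = (∫ ω, W ω ∂μ) + η * a + κ * a := by
    simp only [hlam'_def]
    rw [integral_add hWZ_int (hlam_int.const_mul κ),
      integral_add hW_int (hZ_int.const_mul η), integral_const_mul, integral_const_mul, hca]
  -- stationarity of the mean
  have hmean : (∫ ω, W ω ∂μ) + η * a + κ * a = a := by
    rw [← hEl, hZ'm, hstat_mean]
  -- variance of Z
  have h1 : variance Z μ = a + (∫ ω, lam ω ^ 2 ∂μ) - a ^ 2 := by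
    rw [variance_eq_sub hZ_L2]
    simp only [Pi.pow_apply]
    rw [hb]
  -- independence of W and V
  have hindep : IndepFun W (fun ω => η * Z ω + κ * lam ω) μ := by
    rw [IndepFun_iff_Indep]
    refine indep_of_indep_of_le_right hW_indep ?_
    refine Measurable.comap_le ?_
    have hZm : Measurable[m ⊔ MeasurableSpace.comap Z Real.measurableSpace] Z :=
      (measurable_iff_comap_le.mpr le_rfl).mono le_sup_right le_rfl
    have hlm : Measurable[m ⊔ MeasurableSpace.comap Z Real.measurableSpace] lam :=
      hlam_meas.measurable.mono le_sup_left le_rfl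
    exact (hZm.const_mul η).add (hlm.const_mul κ)
  -- variance split
  have hWV : lam' = W + fun ω => η * Z ω + κ * lam ω := by
    funext ω; simp only [hlam'_def, Pi.add_apply]; ring
  have hsplit : variance lam' μ = variance W μ + variance (fun ω => η * Z ω + κ * lam ω) μ := by
    rw [hWV]
    exact hindep.variance_add hW_L2 hV_L2
  -- variance of V
  have hVint : ∫ ω, (η * Z ω + κ * lam ω) ∂μ = η * a + κ * a := by
    rw [integral_add (hZ_int.const_mul η) (hlam_int.const_mul κ),
      integral_const_mul, integral_const_mul, hca]
  have hVsq : ∫ ω, (η * Z ω + κ * lam ω) ^ 2 ∂μ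
      = η ^ 2 * (a + ∫ ω, lam ω ^ 2 ∂μ) + 2 * η * κ * (∫ ω, lam ω ^ 2 ∂μ)
        + κ ^ 2 * (∫ ω, lam ω ^ 2 ∂μ) := by
    have heq : ∀ ω, (η * Z ω + κ * lam ω) ^ 2
        = η ^ 2 * Z ω ^ 2 + ((2 * η * κ) * (lam ω * Z ω) + κ ^ 2 * lam ω ^ 2) := by
      intro ω; ring
    simp_rw [heq]
    have hB : Integrable (fun ω => (2 * η * κ) * (lam ω * Z ω) + κ ^ 2 * lam ω ^ 2) μ :=
      (hmul.const_mul _).add (hlamsq_int.const_mul _)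
    rw [integral_add (hZsq_int.const_mul _) hB,
      integral_add (hmul.const_mul _) (hlamsq_int.const_mul _),
      integral_const_mul, integral_const_mul, integral_const_mul, hb, hg]
    ring
  have hVvar : variance (fun ω => η * Z ω + κ * lam ω) μ
      = η ^ 2 * (a + ∫ ω, lam ω ^ 2 ∂μ) + 2 * η * κ * (∫ ω, lam ω ^ 2 ∂μ)
        + κ ^ 2 * (∫ ω, lam ω ^ 2 ∂μ) - (η * a + κ * a) ^ 2 := by
    rw [variance_eq_sub hV_L2]
    simp only [Pi.pow_apply]
    rw [hVsq, hVint]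
  -- variance of Z'
  have hZ'sq : ∫ ω, Z' ω ^ 2 ∂μ = (∫ ω, lam' ω ∂μ) + ∫ ω, lam' ω ^ 2 ∂μ := by
    rw [← integral_condExp (f := fun ω => Z' ω ^ 2) hm', integral_congr_ae hZ'_sq,
      integral_add hlam'_int hlam'sq_int]
  have hlam'mean : ∫ ω, lam' ω ∂μ = a := by rw [hZ'm, hstat_mean]
  have h2 : variance Z μ = a + variance lam' μ := by
    rw [← hstat_var, variance_eq_sub hZ'_L2, variance_eq_sub hlam'_L2]
    simp only [Pi.pow_apply]
    rw [hZ'sq, ← hstat_mean, hZ'm]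
    ring
  -- final algebra
  have hq : (1 : ℝ) - (η + κ) ^ 2 ≠ 0 := by nlinarith
  rw [h1] at hstat_var ⊢
  have hE : (a + (∫ ω, lam ω ^ 2 ∂μ) - a ^ 2) * (1 - (η + κ) ^ 2)
      = variance W μ + (1 - κ ^ 2 - 2 * κ * η) * a := by
    have := h2
    rw [h1, hsplit, hVvar] at this
    nlinarith [this]
  field_simp
  linear_combination hE
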